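/- Let −1 < d < 0 and let p_1 ∈ (0.25, 0.4). Let p be the probability vector on 4 symbols ( p_1, (1−p_1)/3, (1−p_1)/3, (1−p_1)/3 ). Then every codeword-length vector l attaining the optimal exponential redundancy R^d_opt(p) has l_1 = 2; in particular no optimal code has l_1 = 1. -/

import Mathlib

set_option maxHeartbeats 1000000



open Real Finset

/-- A valid codeword-length vector: all lengths at least 1 and the Kraft inequality holds. -/
def IsCode (n : ℕ) (l : Fin n → ℕ) : Prop :=
  (∀ i, 1 ≤ l i) ∧ ∑ i, (2 : ℝ) ^ (-(l i : ℝ)) ≤ 1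

/-- Exponential redundancy `R^d(p,l)`. -/
noncomputable def expRedundancy (n : ℕ) (d : ℝ) (p : Fin n → ℝ) (l : Fin n → ℕ) : ℝ :=
  (1 / d) * Real.logb 2 (∑ i, (p i) ^ (1 + d) * (2 : ℝ) ^ (d * (l i : ℝ)))

/-- Optimal exponential redundancy `R^d_opt(p)`. -/
noncomputable def expRedundancyOpt (n : ℕ) (d : ℝ) (p : Fin n → ℝ) : ℝ :=
  sInf { r | ∃ l : Fin n → ℕ, IsCode n l ∧ r = expRedundancy n d p l }


private lemma inv_pow_anti' (m n : ℕ) (h : m ≤ n) : ((2:ℝ)^n)⁻¹ ≤ ((2:ℝ)^m)⁻¹ := by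
  apply inv_anti₀ (by positivity)
  exact pow_le_pow_right₀ one_le_two h

private lemma Tb_half (s : ℝ) (hs0 : 0 < s) (hs1 : s < 1) (b c e : ℕ)
    (hb : 1 ≤ b) (hc : 1 ≤ c) (he : 1 ≤ e)
    (hk : ((2:ℝ)^b)⁻¹ + ((2:ℝ)^c)⁻¹ + ((2:ℝ)^e)⁻¹ ≤ 1/2) :
    s^b + s^c + s^e ≤ s^2 + s^3 + s^3 := by
  have Pb : (0:ℝ) < ((2:ℝ)^b)⁻¹ := by positivity
  have Pc : (0:ℝ) < ((2:ℝ)^c)⁻¹ := by positivity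
  have Pe : (0:ℝ) < ((2:ℝ)^e)⁻¹ := by positivity
  have L : ∀ n : ℕ, n ≤ 1 → (1/2:ℝ) ≤ ((2:ℝ)^n)⁻¹ := by
    intro n h
    calc (1/2:ℝ) = ((2:ℝ)^(1:ℕ))⁻¹ := by norm_num
    _ ≤ _ := inv_pow_anti' n 1 h
  have L2 : ∀ n : ℕ, n ≤ 2 → (1/4:ℝ) ≤ ((2:ℝ)^n)⁻¹ := by
    intro n h
    calc (1/4:ℝ) = ((2:ℝ)^(2:ℕ))⁻¹ := by norm_num
    _ ≤ _ := inv_pow_anti' n 2 h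
  have M : ∀ m n : ℕ, m ≤ n → s^n ≤ s^m := fun m n h => pow_le_pow_of_le_one hs0.le hs1.le h
  have hb2 : 2 ≤ b := by
    by_contra h; push_neg at h
    have := L b (by omega); linarith
  have hc2 : 2 ≤ c := by
    by_contra h; push_neg at h
    have := L c (by omega); linarith
  have he2 : 2 ≤ e := by
    by_contra h; push_neg at h
    have := L e (by omega); linarith
  rcases Nat.lt_or_ge b 3 with h | hb3
  · have hc3 : 3 ≤ c := by
      by_contra hh; push_neg at hh
      have := L2 b (by omega); have := L2 c (by omega); linarith
    have he3 : 3 ≤ e := by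
      by_contra hh; push_neg at hh
      have := L2 b (by omega); have := L2 e (by omega); linarith
    linarith [M 2 b hb2, M 3 c hc3, M 3 e he3]
  · rcases Nat.lt_or_ge c 3 with h' | hc3
    · have he3 : 3 ≤ e := by
        by_contra hh; push_neg at hh
        have := L2 c (by omega); have := L2 e (by omega); linarith
      linarith [M 3 b hb3, M 2 c hc2, M 3 e he3]
    · rcases Nat.lt_or_ge e 3 with h'' | he3
      · linarith [M 3 b hb3, M 3 c hc3, M 2 e he2]
      · linarith [M 3 b hb3, M 3 c hc3, M 3 e he3, M 2 3 (by norm_num : (2:ℕ) ≤ 3)]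

private lemma Tb_34 (s : ℝ) (hs0 : 0 < s) (hs1 : s < 1) (hsh : 1/2 < s) (b c e : ℕ)
    (hb : 1 ≤ b) (hc : 1 ≤ c) (he : 1 ≤ e)
    (hk : ((2:ℝ)^b)⁻¹ + ((2:ℝ)^c)⁻¹ + ((2:ℝ)^e)⁻¹ ≤ 3/4) :
    s^b + s^c + s^e ≤ 3 * s^2 := by
  have Pb : (0:ℝ) < ((2:ℝ)^b)⁻¹ := by positivity
  have Pc : (0:ℝ) < ((2:ℝ)^c)⁻¹ := by positivity
  have Pe : (0:ℝ) < ((2:ℝ)^e)⁻¹ := by positivity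
  have L : ∀ n : ℕ, n ≤ 1 → (1/2:ℝ) ≤ ((2:ℝ)^n)⁻¹ := by
    intro n h
    calc (1/2:ℝ) = ((2:ℝ)^(1:ℕ))⁻¹ := by norm_num
    _ ≤ _ := inv_pow_anti' n 1 h
  have L2 : ∀ n : ℕ, n ≤ 2 → (1/4:ℝ) ≤ ((2:ℝ)^n)⁻¹ := by
    intro n h
    calc (1/4:ℝ) = ((2:ℝ)^(2:ℕ))⁻¹ := by norm_num
    _ ≤ _ := inv_pow_anti' n 2 h
  have M : ∀ m n : ℕ, m ≤ n → s^n ≤ s^m := fun m n h => pow_le_pow_of_le_one hs0.le hs1.le h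
  have key : (0:ℝ) ≤ s * ((2*s - 1) * (1 - s)) :=
    mul_nonneg hs0.le (mul_nonneg (by linarith) (by linarith))
  have hs1p : s^1 = s := pow_one s
  rcases Nat.lt_or_ge b 2 with h | hb2
  · have hc3 : 3 ≤ c := by
      by_contra hh; push_neg at hh
      have := L b (by omega); have := L2 c (by omega); linarith
    have he3 : 3 ≤ e := by
      by_contra hh; push_neg at hh
      have := L b (by omega); have := L2 e (by omega); linarith
    nlinarith [M 1 b hb, M 3 c hc3, M 3 e he3]
  · rcases Nat.lt_or_ge c 2 with h' | hc2
    · have hb3 : 3 ≤ b := by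
        by_contra hh; push_neg at hh
        have := L c (by omega); have := L2 b (by omega); linarith
      have he3 : 3 ≤ e := by
        by_contra hh; push_neg at hh
        have := L c (by omega); have := L2 e (by omega); linarith
      nlinarith [M 1 c hc, M 3 b hb3, M 3 e he3]
    · rcases Nat.lt_or_ge e 2 with h'' | he2
      · have hb3 : 3 ≤ b := by
          by_contra hh; push_neg at hh
          have := L e (by omega); have := L2 b (by omega); linarith
        have hc3 : 3 ≤ c := by
          by_contra hh; push_neg at hh
          have := L e (by omega); have := L2 c (by omega); linarith
        nlinarith [M 1 e he, M 3 b hb3, M 3 c hc3]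
      · linarith [M 2 b hb2, M 2 c hc2, M 2 e he2]

private lemma Tb_78 (s : ℝ) (hs0 : 0 < s) (hs1 : s < 1) (b c e : ℕ)
    (hb : 1 ≤ b) (hc : 1 ≤ c) (he : 1 ≤ e)
    (hk : ((2:ℝ)^b)⁻¹ + ((2:ℝ)^c)⁻¹ + ((2:ℝ)^e)⁻¹ < 1) :
    s^b + s^c + s^e ≤ s + s^2 + s^3 := by
  have Pb : (0:ℝ) < ((2:ℝ)^b)⁻¹ := by positivity
  have Pc : (0:ℝ) < ((2:ℝ)^c)⁻¹ := by positivity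
  have Pe : (0:ℝ) < ((2:ℝ)^e)⁻¹ := by positivity
  have L : ∀ n : ℕ, n ≤ 1 → (1/2:ℝ) ≤ ((2:ℝ)^n)⁻¹ := by
    intro n h
    calc (1/2:ℝ) = ((2:ℝ)^(1:ℕ))⁻¹ := by norm_num
    _ ≤ _ := inv_pow_anti' n 1 h
  have L2 : ∀ n : ℕ, n ≤ 2 → (1/4:ℝ) ≤ ((2:ℝ)^n)⁻¹ := by
    intro n h
    calc (1/4:ℝ) = ((2:ℝ)^(2:ℕ))⁻¹ := by norm_num
    _ ≤ _ := inv_pow_anti' n 2 h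
  have M : ∀ m n : ℕ, m ≤ n → s^n ≤ s^m := fun m n h => pow_le_pow_of_le_one hs0.le hs1.le h
  have hs1p : ∀ n : ℕ, 1 ≤ n → s^n ≤ s := by
    intro n h; simpa using M 1 n h
  have key : (0:ℝ) ≤ s * (1 - s)^2 := by positivity
  rcases Nat.lt_or_ge b 2 with h | hb2
  · -- b = 1 ⇒ at most one of c,e is ≤ 2, and not both ≤ 2
    have hLb := L b (by omega)
    rcases Nat.lt_or_ge c 3 with h' | hc3
    · have he3 : 3 ≤ e := by
        by_contra hh; push_neg at hh
        have := L2 c (by omega); have := L2 e (by omega); linarith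
      have hc2 : 2 ≤ c := by
        by_contra hh; push_neg at hh
        have := L c (by omega); linarith
      linarith [hs1p b hb, M 2 c hc2, M 3 e he3]
    · have he2 : 2 ≤ e := by
        by_contra hh; push_neg at hh
        have := L e (by omega); linarith
      linarith [hs1p b hb, M 3 c hc3, M 2 e he2]
  · rcases Nat.lt_or_ge c 2 with h' | hc2
    · -- c = 1
      rcases Nat.lt_or_ge b 3 with h'' | hb3
      · have he3 : 3 ≤ e := by
          by_contra hh; push_neg at hh
          have := L c (by omega); have := L2 b (by omega); have := L2 e (by omega); linarith
        linarith [M 2 b hb2, hs1p c hc, M 3 e he3]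
      · have he2 : 2 ≤ e := by
          by_contra hh; push_neg at hh
          have := L c (by omega); have := L e (by omega); linarith
        linarith [M 3 b hb3, hs1p c hc, M 2 e he2]
    · rcases Nat.lt_or_ge e 2 with h'' | he2
      · -- e = 1
        rcases Nat.lt_or_ge b 3 with h3 | hb3
        · have hc3 : 3 ≤ c := by
            by_contra hh; push_neg at hh
            have := L e (by omega); have := L2 b (by omega); have := L2 c (by omega); linarith
          linarith [M 2 b hb2, M 3 c hc3, hs1p e he]
        · linarith [M 3 b hb3, M 2 c hc2, hs1p e he]
      · -- all ≥ 2 : 3 s^2 ≤ s + s^2 + s^3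
        nlinarith [M 2 b hb2, M 2 c hc2, M 2 e he2]

private lemma Smain (d p₁ : ℝ) (hd : -1 < d) (hd0 : d < 0)
    (h1 : 1/4 < p₁) (h2 : p₁ < 2/5) (l : Fin 4 → ℕ) (hl : IsCode 4 l) :
    (∑ i, (![p₁, (1 - p₁) / 3, (1 - p₁) / 3, (1 - p₁) / 3] i) ^ (1 + d)
        * (2 : ℝ) ^ (d * (l i : ℝ)))
      ≤ (∑ i, (![p₁, (1 - p₁) / 3, (1 - p₁) / 3, (1 - p₁) / 3] i) ^ (1 + d)
        * (2 : ℝ) ^ (d * (((![2,2,2,2] : Fin 4 → ℕ)) i : ℝ))) ∧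
    (l 0 ≠ 2 →
      (∑ i, (![p₁, (1 - p₁) / 3, (1 - p₁) / 3, (1 - p₁) / 3] i) ^ (1 + d)
        * (2 : ℝ) ^ (d * (l i : ℝ)))
      < (∑ i, (![p₁, (1 - p₁) / 3, (1 - p₁) / 3, (1 - p₁) / 3] i) ^ (1 + d)
        * (2 : ℝ) ^ (d * (((![2,2,2,2] : Fin 4 → ℕ)) i : ℝ)))) := by
  set q : ℝ := (1 - p₁) / 3 with hqdef
  set s : ℝ := (2:ℝ) ^ d with hsdef
  set A : ℝ := p₁ ^ (1 + d) with hAdef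
  set B : ℝ := q ^ (1 + d) with hBdef
  have hp0 : 0 < p₁ := by linarith
  have hq0 : 0 < q := by rw [hqdef]; linarith
  have hqp : q < p₁ := by rw [hqdef]; linarith
  have hp2q : p₁ < 2 * q := by rw [hqdef]; linarith
  have ha : 0 < 1 + d := by linarith
  have hs0 : 0 < s := Real.rpow_pos_of_pos (by norm_num) d
  have hs1 : s < 1 := Real.rpow_lt_one_of_one_lt_of_neg (by norm_num) hd0
  have hsh : 1/2 < s := by
    have : (2:ℝ) ^ (-1:ℝ) < (2:ℝ) ^ d :=
      (Real.rpow_lt_rpow_left_iff (by norm_num)).2 hd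
    rw [Real.rpow_neg_one] at this
    rw [hsdef]; linarith
  have hA0 : 0 < A := Real.rpow_pos_of_pos hp0 _
  have hB0 : 0 < B := Real.rpow_pos_of_pos hq0 _
  have hBA : B < A := Real.rpow_lt_rpow hq0.le hqp ha
  have hA2B : A < 2 * s * B := by
    have h1' : A < (2*q) ^ (1+d) := Real.rpow_lt_rpow hp0.le hp2q ha
    have h2' : ((2:ℝ)*q) ^ (1+d) = (2:ℝ)^(1+d) * B := Real.mul_rpow (by norm_num) hq0.le
    have h3' : (2:ℝ)^(1+d) = 2 * s := by
      rw [hsdef, Real.rpow_add (by norm_num), Real.rpow_one]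
    rw [h2', h3'] at h1'
    linarith
  have hsp : ∀ n : ℕ, (2:ℝ)^(d*(n:ℝ)) = s ^ n := by
    intro n
    rw [hsdef, ← Real.rpow_natCast ((2:ℝ)^d) n, ← Real.rpow_mul (by norm_num)]
  have hinv : ∀ n : ℕ, (2:ℝ)^(-(n:ℝ)) = ((2:ℝ)^n)⁻¹ := by
    intro n
    rw [Real.rpow_neg (by norm_num), Real.rpow_natCast]
  clear_value q s A B
  have key : ∀ m : Fin 4 → ℕ,
      (∑ i, (![p₁, q, q, q] i) ^ (1 + d) * (2 : ℝ) ^ (d * (m i : ℝ)))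
        = A * s^(m 0) + (B * s^(m 1) + B * s^(m 2) + B * s^(m 3)) := by
    intro m
    simp only [Fin.sum_univ_four, Matrix.cons_val_zero, Matrix.cons_val_one, Matrix.head_cons,
      Matrix.cons_val_two, Matrix.tail_cons, Matrix.cons_val_three]
    rw [hsp, hsp, hsp, hsp, hAdef, hBdef]
    ring
  have hRHS : (∑ i, (![p₁, q, q, q] i) ^ (1 + d)
        * (2 : ℝ) ^ (d * (((![2,2,2,2] : Fin 4 → ℕ)) i : ℝ)))
      = A * s^2 + (B * s^2 + B * s^2 + B * s^2) := by
    rw [key ![2,2,2,2]]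
    norm_num
    rfl
  have hkraft : ((2:ℝ)^(l 0))⁻¹ + (((2:ℝ)^(l 1))⁻¹ + ((2:ℝ)^(l 2))⁻¹ + ((2:ℝ)^(l 3))⁻¹) ≤ 1 := by
    have h := hl.2
    simp only [Fin.sum_univ_four] at h
    rw [hinv, hinv, hinv, hinv] at h
    linarith
  have hb1 := hl.1 1
  have hc1 := hl.1 2
  have he1 := hl.1 3
  have h01 := hl.1 0
  have P0 : (0:ℝ) < ((2:ℝ)^(l 0))⁻¹ := by positivity
  -- main case analysis on l 0
  have main : (l 0 = 2 →
        A * s^(l 0) + (B * s^(l 1) + B * s^(l 2) + B * s^(l 3))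
          ≤ A * s^2 + (B * s^2 + B * s^2 + B * s^2)) ∧
      (l 0 ≠ 2 →
        A * s^(l 0) + (B * s^(l 1) + B * s^(l 2) + B * s^(l 3))
          < A * s^2 + (B * s^2 + B * s^2 + B * s^2)) := by
    constructor
    · intro h0
      have hK : ((2:ℝ)^(l 1))⁻¹ + ((2:ℝ)^(l 2))⁻¹ + ((2:ℝ)^(l 3))⁻¹ ≤ 3/4 := by
        rw [h0] at hkraft; norm_num at hkraft; linarith
      have hT := Tb_34 s hs0 hs1 hsh (l 1) (l 2) (l 3) hb1 hc1 he1 hK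
      rw [h0]
      nlinarith [hT, hB0]
    · intro h0
      rcases Nat.lt_or_ge (l 0) 2 with h | h3
      · -- l 0 = 1
        have h01' : l 0 = 1 := by omega
        have hK : ((2:ℝ)^(l 1))⁻¹ + ((2:ℝ)^(l 2))⁻¹ + ((2:ℝ)^(l 3))⁻¹ ≤ 1/2 := by
          rw [h01'] at hkraft; norm_num at hkraft; linarith
        have hT := Tb_half s hs0 hs1 (l 1) (l 2) (l 3) hb1 hc1 he1 hK
        have hBT : B * s^(l 1) + B * s^(l 2) + B * s^(l 3) ≤ B * (s^2 + s^3 + s^3) := by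
          nlinarith [hT, hB0]
        rw [h01', pow_one]
        -- A*s + B*(s^2+2 s^3) < A*s^2 + 3 B s^2  using A < 2 s B
        have hstep : A * s - A * s^2 < 2*B*s^2 - 2*B*s^3 := by
          nlinarith [mul_pos (sub_pos.2 hA2B) (mul_pos hs0 (sub_pos.2 hs1))]
        nlinarith [hBT, hstep]
      · have h3' : 3 ≤ l 0 := by omega
        have hK : ((2:ℝ)^(l 1))⁻¹ + ((2:ℝ)^(l 2))⁻¹ + ((2:ℝ)^(l 3))⁻¹ < 1 := by
          linarith
        have hT := Tb_78 s hs0 hs1 (l 1) (l 2) (l 3) hb1 hc1 he1 hK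
        have hBT : B * s^(l 1) + B * s^(l 2) + B * s^(l 3) ≤ B * (s + s^2 + s^3) := by
          nlinarith [hT, hB0]
        have hM : s^(l 0) ≤ s^3 := pow_le_pow_of_le_one hs0.le hs1.le h3'
        have hAM : A * s^(l 0) ≤ A * s^3 := by nlinarith [hM, hA0]
        -- A s^3 + B (s+s^2+s^3) < A s^2 + 3 B s^2 using B(1-s) < A s
        have hBAs : B * (1 - s) < A * s := by
          have t1 : B * (1 - s) ≤ A * (1 - s) :=
            mul_le_mul_of_nonneg_right hBA.le (by linarith)
          have t2 : A * (1 - s) < A * s := by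
            apply mul_lt_mul_of_pos_left _ hA0
            linarith
          linarith
        have hstep : 0 < A*s^2 - A*s^3 - B*s + 2*B*s^2 - B*s^3 := by
          nlinarith [mul_pos (sub_pos.2 hBAs) (mul_pos hs0 (sub_pos.2 hs1))]
        nlinarith [hBT, hAM, hstep]
  rw [key l, hRHS]
  constructor
  · rcases eq_or_ne (l 0) 2 with h | h
    · exact main.1 h
    · exact (main.2 h).le
  · exact main.2

theorem stmt_14 (d : ℝ) (hd : -1 < d) (hd0 : d < 0)
    (p₁ : ℝ) (hp₁ : p₁ ∈ Set.Ioo (0.25 : ℝ) 0.4) :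
    (∀ l : Fin 4 → ℕ, IsCode 4 l →
      expRedundancy 4 d ![p₁, (1 - p₁) / 3, (1 - p₁) / 3, (1 - p₁) / 3] l
        = expRedundancyOpt 4 d ![p₁, (1 - p₁) / 3, (1 - p₁) / 3, (1 - p₁) / 3] →
      l 0 = 2) ∧
    ¬ ∃ l : Fin 4 → ℕ, IsCode 4 l ∧
      expRedundancy 4 d ![p₁, (1 - p₁) / 3, (1 - p₁) / 3, (1 - p₁) / 3] l
        = expRedundancyOpt 4 d ![p₁, (1 - p₁) / 3, (1 - p₁) / 3, (1 - p₁) / 3] ∧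
      l 0 = 1 := by
  obtain ⟨hpl, hpr⟩ := hp₁
  have h1 : 1/4 < p₁ := by norm_num at hpl; linarith
  have h2 : p₁ < 2/5 := by norm_num at hpr; linarith
  have hp0 : 0 < p₁ := by linarith
  have hq0 : 0 < (1 - p₁)/3 := by linarith
  have hd' : 1/d < 0 := one_div_neg.2 hd0
  have hSpos : ∀ m : Fin 4 → ℕ,
      0 < ∑ i, (![p₁, (1 - p₁) / 3, (1 - p₁) / 3, (1 - p₁) / 3] i) ^ (1 + d)
        * (2:ℝ)^(d * (m i : ℝ)) := by
    intro m
    simp only [Fin.sum_univ_four, Matrix.cons_val_zero, Matrix.cons_val_one, Matrix.head_cons,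
      Matrix.cons_val_two, Matrix.tail_cons, Matrix.cons_val_three]
    have t0 := Real.rpow_pos_of_pos hp0 (1 + d)
    have t1 := Real.rpow_pos_of_pos hq0 (1 + d)
    have u0 := Real.rpow_pos_of_pos (show (0:ℝ) < 2 by norm_num) (d * (m 0 : ℝ))
    have u1 := Real.rpow_pos_of_pos (show (0:ℝ) < 2 by norm_num) (d * (m 1 : ℝ))
    have u2 := Real.rpow_pos_of_pos (show (0:ℝ) < 2 by norm_num) (d * (m 2 : ℝ))
    have u3 := Real.rpow_pos_of_pos (show (0:ℝ) < 2 by norm_num) (d * (m 3 : ℝ))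
    nlinarith [mul_pos t0 u0, mul_pos t1 u1, mul_pos t1 u2, mul_pos t1 u3]
  have hcode2 : IsCode 4 ![2,2,2,2] := by
    constructor
    · intro i; fin_cases i <;> norm_num
    · have h14 : ∀ i : Fin 4, (2:ℝ)^(-(((![2,2,2,2] : Fin 4 → ℕ) i : ℕ):ℝ)) = 1/4 := by
        intro i
        fin_cases i <;>
        · show (2:ℝ)^(-((2:ℕ):ℝ)) = 1/4
          rw [Real.rpow_neg (by norm_num), Real.rpow_natCast]; norm_num
      rw [Fin.sum_univ_four, h14 0, h14 1, h14 2, h14 3]; norm_num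
  have hle : ∀ l : Fin 4 → ℕ, IsCode 4 l →
      expRedundancy 4 d ![p₁, (1 - p₁) / 3, (1 - p₁) / 3, (1 - p₁) / 3] ![2,2,2,2]
        ≤ expRedundancy 4 d ![p₁, (1 - p₁) / 3, (1 - p₁) / 3, (1 - p₁) / 3] l := by
    intro l hl
    have hS := (Smain d p₁ hd hd0 h1 h2 l hl).1
    unfold expRedundancy
    apply mul_le_mul_of_nonpos_left _ hd'.le
    exact (Real.logb_le_logb (by norm_num) (hSpos l) (hSpos ![2,2,2,2])).2 hS
  have hopt : expRedundancyOpt 4 d ![p₁, (1 - p₁) / 3, (1 - p₁) / 3, (1 - p₁) / 3]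
      = expRedundancy 4 d ![p₁, (1 - p₁) / 3, (1 - p₁) / 3, (1 - p₁) / 3] ![2,2,2,2] := by
    unfold expRedundancyOpt
    apply le_antisymm
    · refine csInf_le ⟨expRedundancy 4 d ![p₁, (1 - p₁) / 3, (1 - p₁) / 3, (1 - p₁) / 3]
        ![2,2,2,2], ?_⟩ ⟨![2,2,2,2], hcode2, rfl⟩
      rintro r ⟨l, hl, rfl⟩
      exact hle l hl
    · refine le_csInf ⟨_, ⟨![2,2,2,2], hcode2, rfl⟩⟩ ?_
      rintro r ⟨l, hl, rfl⟩
      exact hle l hl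
  have hmain : ∀ l : Fin 4 → ℕ, IsCode 4 l →
      expRedundancy 4 d ![p₁, (1 - p₁) / 3, (1 - p₁) / 3, (1 - p₁) / 3] l
        = expRedundancyOpt 4 d ![p₁, (1 - p₁) / 3, (1 - p₁) / 3, (1 - p₁) / 3] → l 0 = 2 := by
    intro l hl hEq
    by_contra hne
    have hS := (Smain d p₁ hd hd0 h1 h2 l hl).2 hne
    have hlog := Real.logb_lt_logb (show (1:ℝ) < 2 by norm_num) (hSpos l) hS
    have hR := mul_lt_mul_of_neg_left hlog hd'
    rw [hopt] at hEq
    unfold expRedundancy at hEq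
    linarith [hEq, hR]
  refine ⟨hmain, ?_⟩
  rintro ⟨l, hl, hEq, h1'⟩
  have := hmain l hl hEq
  omega
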